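/- Let q ≥ 4 be an even integer and n ≥ 1. Let ι : {0,1}ⁿ → (ZMod q)ⁿ be the coordinatewise embedding sending 0 to 0 and 1 to 1, let Eⁿ = {0, 2, 4, …, q−2}ⁿ ⊆ (ZMod q)ⁿ be the n-tuples of even residues, let C₂ ⊆ {0,1}ⁿ be any set, and let C = { e + ι(c) : e ∈ Eⁿ, c ∈ C₂ }. Then for every natural number z, |{ x ∈ C : w(x) = z }| = 2^z · |{ c ∈ C₂ : the Hamming weight of c equals z }|, where w(x) = Σ_k wt(x_k) ∈ ℕ ∪ {∞} with wt(a) = 0 if a = 0, wt(a) = 1 if a = ±1, and wt(a) = ∞ otherwise. -/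

import Mathlib

open scoped ENat

/-- Single-letter weight on `ZMod q`: `0` at `0`, `1` at `±1`, `∞` otherwise. -/
noncomputable def wt1 (q : ℕ) (a : ZMod q) : ℕ∞ :=
  if a = 0 then 0 else if a = 1 ∨ a = -1 then 1 else ⊤

/-- Weight `w(x) = Σₖ wt(xₖ) ∈ ℕ ∪ {∞}` on `(ZMod q)ⁿ`. -/
noncomputable def wgt (q n : ℕ) (x : Fin n → ZMod q) : ℕ∞ :=
  ∑ k, wt1 q (x k)

/-- Coordinatewise embedding `{0,1}ⁿ → (ZMod q)ⁿ` sending `0 ↦ 0`, `1 ↦ 1`. -/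
def iota (q n : ℕ) (c : Fin n → ZMod 2) : Fin n → ZMod q :=
  fun k => ((c k).val : ZMod q)

theorem stmt15 (q n : ℕ) [NeZero q] (hq : 4 ≤ q) (hqe : Even q) (hn : 1 ≤ n)
    (C₂ : Finset (Fin n → ZMod 2)) (z : ℕ) :
    ((((Finset.univ.filter fun e : Fin n → ZMod q => ∀ k, ∃ b : ZMod q, e k = 2 * b) ×ˢ C₂).image
        (fun p => p.1 + iota q n p.2)).filter
      (fun x => wgt q n x = (z : ℕ∞))).card
    = 2 ^ z * (C₂.filter fun c => (Finset.univ.filter fun k => c k ≠ 0).card = z).card := by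
  classical
  haveI : Fact (1 < q) := ⟨by omega⟩
  have h2 : (2:ℕ) ∣ q := hqe.two_dvd
  set p : ZMod q →+* ZMod 2 := ZMod.castHom h2 (ZMod 2) with hpdef
  set f : (Fin n → ZMod q) → (Fin n → ZMod 2) := fun x k => p (x k) with hfdef
  have hone : (1 : ZMod q) ≠ 0 := one_ne_zero
  have hneg : (-1 : ZMod q) ≠ 0 := neg_ne_zero.mpr one_ne_zero
  have honeneg : (1 : ZMod q) ≠ -1 := by
    intro h
    have h2z : ((2:ℕ) : ZMod q) = 0 := by push_cast; linear_combination h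
    rw [ZMod.natCast_eq_zero_iff] at h2z
    have := Nat.le_of_dvd (by norm_num) h2z
    omega
  have hpnat : ∀ m : ℕ, p ((m : ZMod q)) = (m : ZMod 2) := fun m => map_natCast p m
  have hp2 : p 2 = 0 := by
    have h22 : ((2:ℕ) : ZMod q) = 2 := by push_cast; ring
    rw [← h22, hpnat]; decide
  have hp1 : p 1 = 1 := map_one p
  have hpneg1 : p (-1) = 1 := by rw [map_neg, hp1]; decide
  have heven : ∀ a : ZMod q, (∃ b, a = 2 * b) ↔ p a = 0 := by
    intro a
    constructor
    · rintro ⟨b, rfl⟩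
      rw [map_mul, hp2, zero_mul]
    · intro h
      have hval : p a = ((a.val : ℕ) : ZMod 2) := by
        conv_lhs => rw [← ZMod.natCast_zmod_val a]
        exact hpnat a.val
      rw [hval, ZMod.natCast_eq_zero_iff] at h
      obtain ⟨b, hb⟩ := h
      refine ⟨(b : ZMod q), ?_⟩
      conv_lhs => rw [← ZMod.natCast_zmod_val a]
      rw [hb]; push_cast; ring
  have hziota : ∀ a : ZMod 2, ((a.val : ZMod 2)) = a := by decide
  have hpiota : ∀ c : Fin n → ZMod 2, f (iota q n c) = c := by
    intro c; funext k
    show p (((c k).val : ZMod q)) = c k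
    rw [hpnat, hziota]
  -- f x k = 0 ↔ x k = 0, for coordinates in {0,1,-1}
  have hfzero : ∀ a : ZMod q, (a = 0 ∨ a = 1 ∨ a = -1) → (p a = 0 ↔ a = 0) := by
    rintro a (rfl | rfl | rfl)
    · simp
    · rw [hp1]; simp [hone]
    · rw [hpneg1]; simp [hneg]
  -- weight values
  have hwt0 : wt1 q 0 = 0 := by simp [wt1]
  have hwt1 : wt1 q 1 = 1 := by simp [wt1, hone]
  have hwtn1 : wt1 q (-1) = 1 := by
    simp [wt1, hneg]
  have hwttop : ∀ a : ZMod q, ¬(a = 0 ∨ a = 1 ∨ a = -1) → wt1 q a = ⊤ := by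
    intro a ha
    push_neg at ha
    simp [wt1, ha.1, ha.2.1, ha.2.2]
  -- weight characterization
  have hw : ∀ x : Fin n → ZMod q, wgt q n x = (z : ℕ∞) ↔
      (∀ k, x k = 0 ∨ x k = 1 ∨ x k = -1) ∧
        (Finset.univ.filter fun k => x k ≠ 0).card = z := by
    intro x
    by_cases hall : ∀ k, x k = 0 ∨ x k = 1 ∨ x k = -1
    · have hterm : ∀ k, wt1 q (x k) = (((if x k = 0 then 0 else 1 : ℕ)) : ℕ∞) := by
        intro k
        rcases hall k with h | h | h <;> rw [h] <;> simp [hwt0, hwt1, hwtn1, hone, hneg]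
      have : wgt q n x = ((∑ k, (if x k = 0 then 0 else 1 : ℕ) : ℕ) : ℕ∞) := by
        rw [wgt, Nat.cast_sum]
        exact Finset.sum_congr rfl fun k _ => hterm k
      rw [this, Nat.cast_inj]
      have hsum : (∑ k, (if x k = 0 then 0 else 1 : ℕ)) =
          (Finset.univ.filter fun k => x k ≠ 0).card := by
        rw [Finset.card_filter]
        exact Finset.sum_congr rfl fun k _ => by by_cases h : x k = 0 <;> simp [h]
      rw [hsum]
      exact ⟨fun h => ⟨hall, h⟩, fun h => h.2⟩
    · push_neg at hall
      obtain ⟨k, hk⟩ := hall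
      have hk' : ¬(x k = 0 ∨ x k = 1 ∨ x k = -1) := by push_neg; exact hk
      have : wgt q n x = ⊤ := by
        rw [wgt]
        have hle : wt1 q (x k) ≤ ∑ j, wt1 q (x j) :=
          Finset.single_le_sum (f := fun j => wt1 q (x j)) (fun i _ => zero_le)
            (Finset.mem_univ k)
        rw [hwttop _ hk'] at hle
        exact top_le_iff.mp hle
      rw [this]
      constructor
      · intro h; exact absurd h (by simp)
      · rintro ⟨h1, -⟩; exact absurd (h1 k) hk'
  -- membership characterization
  have hmem : ∀ x : Fin n → ZMod q,
      (x ∈ (((Finset.univ.filter fun e : Fin n → ZMod q => ∀ k, ∃ b : ZMod q, e k = 2 * b)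
          ×ˢ C₂).image (fun p => p.1 + iota q n p.2)).filter
        (fun x => wgt q n x = (z : ℕ∞))) ↔
      f x ∈ C₂ ∧ (∀ k, x k = 0 ∨ x k = 1 ∨ x k = -1) ∧
        (Finset.univ.filter fun k => x k ≠ 0).card = z := by
    intro x
    simp only [Finset.mem_filter, Finset.mem_image, Finset.mem_product, Finset.mem_univ,
      true_and, Prod.exists]
    rw [hw]
    constructor
    · rintro ⟨⟨e, c, ⟨he, hc⟩, rfl⟩, hwz⟩
      have hfc : f (e + iota q n c) = c := by
        funext k
        show p (e k + iota q n c k) = c k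
        rw [map_add]
        have : p (e k) = 0 := (heven (e k)).mp (he k)
        rw [this, zero_add]
        show p (((c k).val : ZMod q)) = c k
        rw [hpnat, hziota]
      rw [hfc]
      exact ⟨hc, hwz⟩
    · rintro ⟨hc, hwz⟩
      refine ⟨⟨x - iota q n (f x), f x, ⟨fun k => ?_, hc⟩, by ring⟩, hwz⟩
      rw [heven]
      show p (x k - iota q n (f x) k) = 0
      rw [map_sub]
      have : p (iota q n (f x) k) = f x k := congrFun (hpiota (f x)) k
      rw [this]
      exact sub_self _
  -- fiberwise counting
  have hmaps : ∀ x ∈ (((Finset.univ.filter fun e : Fin n → ZMod q =>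
        ∀ k, ∃ b : ZMod q, e k = 2 * b) ×ˢ C₂).image (fun p => p.1 + iota q n p.2)).filter
        (fun x => wgt q n x = (z : ℕ∞)),
      f x ∈ C₂.filter fun c => (Finset.univ.filter fun k => c k ≠ 0).card = z := by
    intro x hx
    rw [hmem] at hx
    obtain ⟨hc, hall, hcard⟩ := hx
    rw [Finset.mem_filter]
    refine ⟨hc, ?_⟩
    rw [← hcard]
    congr 1
    apply Finset.filter_congr
    intro k _
    simp only [ne_eq]
    rw [not_iff_not]
    exact hfzero (x k) (hall k)
  rw [Finset.card_eq_sum_card_fiberwise hmaps]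
  -- each fiber has cardinality 2^z
  have hfiber : ∀ c ∈ C₂.filter fun c => (Finset.univ.filter fun k => c k ≠ 0).card = z,
      (((((Finset.univ.filter fun e : Fin n → ZMod q => ∀ k, ∃ b : ZMod q, e k = 2 * b)
          ×ˢ C₂).image (fun p => p.1 + iota q n p.2)).filter
        (fun x => wgt q n x = (z : ℕ∞))).filter fun x => f x = c).card = 2 ^ z := by
    intro c hc
    rw [Finset.mem_filter] at hc
    obtain ⟨hcC, hccard⟩ := hc
    have h2zm : ∀ a : ZMod 2, a ≠ 0 → a = 1 := by decide
    have hset : ((((Finset.univ.filter fun e : Fin n → ZMod q =>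
          ∀ k, ∃ b : ZMod q, e k = 2 * b) ×ˢ C₂).image (fun p => p.1 + iota q n p.2)).filter
        (fun x => wgt q n x = (z : ℕ∞))).filter (fun x => f x = c)
        = Fintype.piFinset (fun k => if c k = 0 then ({0} : Finset (ZMod q)) else {1, -1}) := by
      ext x
      rw [Finset.mem_filter, hmem, Fintype.mem_piFinset]
      constructor
      · rintro ⟨⟨-, hall, -⟩, rfl⟩
        intro k
        by_cases h : f x k = 0
        · rw [if_pos h, Finset.mem_singleton]
          exact (hfzero (x k) (hall k)).mp h
        · rw [if_neg h, Finset.mem_insert, Finset.mem_singleton]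
          rcases hall k with h0 | h1 | h1
          · exact absurd ((hfzero (x k) (hall k)).mpr h0) h
          · exact Or.inl h1
          · exact Or.inr h1
      · intro h
        have hcoord : ∀ k, (c k = 0 ∧ x k = 0) ∨ (c k ≠ 0 ∧ (x k = 1 ∨ x k = -1)) := by
          intro k
          have := h k
          by_cases hck : c k = 0
          · rw [if_pos hck, Finset.mem_singleton] at this
            exact Or.inl ⟨hck, this⟩
          · rw [if_neg hck, Finset.mem_insert, Finset.mem_singleton] at this
            exact Or.inr ⟨hck, this⟩
        have hfx : f x = c := by
          funext k
          rcases hcoord k with ⟨hck, hxk⟩ | ⟨hck, hxk⟩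
          · show p (x k) = c k
            rw [hxk, map_zero, hck]
          · show p (x k) = c k
            rcases hxk with h1 | h1 <;> rw [h1]
            · rw [hp1, h2zm _ hck]
            · rw [hpneg1, h2zm _ hck]
        have hall : ∀ k, x k = 0 ∨ x k = 1 ∨ x k = -1 := by
          intro k
          rcases hcoord k with ⟨-, hxk⟩ | ⟨-, hxk⟩
          · exact Or.inl hxk
          · exact Or.inr hxk
        refine ⟨⟨hfx ▸ hcC, hall, ?_⟩, hfx⟩
        rw [← hccard]
        congr 1
        apply Finset.filter_congr
        intro k _
        simp only [ne_eq, not_iff_not]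
        constructor
        · intro hxk
          rcases hcoord k with ⟨hck, -⟩ | ⟨hck, hx1⟩
          · exact hck
          · exact absurd hxk (by rcases hx1 with h1 | h1 <;> rw [h1] <;> [exact hone; exact hneg])
        · intro hck
          rcases hcoord k with ⟨-, hxk⟩ | ⟨hck', -⟩
          · exact hxk
          · exact absurd hck hck'
    rw [hset, Fintype.card_piFinset]
    have : ∀ k, (if c k = 0 then ({0} : Finset (ZMod q)) else {1, -1}).card
        = if c k = 0 then 1 else 2 := by
      intro k
      by_cases h : c k = 0
      · simp [h]
      · rw [if_neg h, if_neg h]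
        rw [Finset.card_insert_of_notMem (by simp [honeneg]), Finset.card_singleton]
    simp only [this]
    rw [Finset.prod_ite, Finset.prod_const_one, one_mul, Finset.prod_const]
    congr 1
  rw [Finset.sum_congr rfl hfiber, Finset.sum_const, smul_eq_mul, mul_comm]
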